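/- Let G be a locally compact Hausdorff topological group such that for every open neighborhood U of the identity there exists a compact normal subgroup N_U ⊆ U for which G/N_U is a Lie group with finitely many connected components, and let 𝔑 be the family of all compact normal subgroups N of G such that G/N is a Lie group with finitely many connected components. Let J₀ = {N_{U_i} : i ∈ ω} ⊆ 𝔑 be a countable subset and set K := ⋂_{N ∈ J₀} N. If M ⊆ G/K is non-meager in the quotient topology, then φ_K^{-1}(M) is non-meager in G, where φ_K: G → G/K is the canonical projection. -/

import Mathlib

/-- A topological group is a Lie group if it carries a smooth manifold structure (modelled
on some Euclidean space) making the group operations smooth. -/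
def IsLieGroup (G : Type*) [Group G] [TopologicalSpace G] : Prop :=
  ∃ (n : ℕ) (_ : ChartedSpace (EuclideanSpace ℝ (Fin n)) G),
    LieGroup (modelWithCornersSelf ℝ (EuclideanSpace ℝ (Fin n))) (⊤ : ℕ∞) G

/-- Membership in the family `𝔑`: `N` is a compact normal subgroup such that `G/N` is a
Lie group with finitely many connected components. -/
class IsLieQuotient {G : Type*} [Group G] [TopologicalSpace G] (N : Subgroup G)
    extends toNormal : N.Normal : Prop where
  compact : IsCompact (N : Set G)
  lie : IsLieGroup (G ⧸ N)
  finiteComponents : Finite (ConnectedComponents (G ⧸ N))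


open Set Function TopologicalSpace Topology Pointwise

section AuxLemmas

theorem aux_secondCountable_of_sigmaCompact_of_locally {X : Type*} [TopologicalSpace X]
    [SigmaCompactSpace X]
    (h : ∀ x : X, ∃ U : Set X, IsOpen U ∧ x ∈ U ∧ SecondCountableTopology U) :
    SecondCountableTopology X := by
  choose U hUo hxU hUsc using h
  have hcov : ∀ n, ∃ t : Finset X, compactCovering X n ⊆ ⋃ x ∈ t, U x := by
    intro n
    exact (isCompact_compactCovering X n).elim_finite_subcover U hUo
      (fun y _ => mem_iUnion.mpr ⟨y, hxU y⟩)
  choose t ht using hcov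
  set S : Set X := ⋃ n, (t n : Set X) with hS
  haveI : Countable S := (countable_iUnion (fun n => (t n).countable_toSet)).to_subtype
  haveI : ∀ s : S, SecondCountableTopology (U s.1) := fun s => hUsc s.1
  apply secondCountableTopology_of_countable_cover (U := fun s : S => U s.1)
    (fun s => hUo s.1)
  apply eq_univ_of_forall
  intro y
  obtain ⟨n, hn⟩ := exists_mem_compactCovering y
  obtain ⟨x, hxt, hyx⟩ := mem_iUnion₂.mp (ht n hn)
  exact mem_iUnion.mpr ⟨⟨x, mem_iUnion.mpr ⟨n, hxt⟩⟩, hyx⟩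

theorem aux_secondCountable_subtype {X Y : Type*} [TopologicalSpace X] [TopologicalSpace Y]
    [T2Space X] [T2Space Y] [SecondCountableTopology Y]
    {f : X → Y} (hf : Continuous f) (hinj : Injective f) {Q : Set X} (hQ : IsCompact Q) :
    SecondCountableTopology Q := by
  haveI : CompactSpace Q := isCompact_iff_compactSpace.mp hQ
  have hc : Continuous (fun q : Q => f q.1) := hf.comp continuous_subtype_val
  have hce := hc.isClosedEmbedding (fun a b hab => Subtype.ext (hinj hab))
  exact hce.toIsEmbedding.secondCountableTopology

theorem aux_loc_secondCountable {X Y : Type*} [TopologicalSpace X] [TopologicalSpace Y]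
    [T2Space X] [T2Space Y] [LocallyCompactSpace X] [SecondCountableTopology Y]
    {f : X → Y} (hf : Continuous f) (hinj : Injective f) (x : X) :
    ∃ U : Set X, IsOpen U ∧ x ∈ U ∧ SecondCountableTopology U := by
  obtain ⟨Q, hQc, hQmem⟩ := exists_compact_mem_nhds x
  haveI := aux_secondCountable_subtype hf hinj hQc
  refine ⟨interior Q, isOpen_interior, mem_interior_iff_mem_nhds.mpr hQmem, ?_⟩
  exact (IsEmbedding.inclusion interior_subset).secondCountableTopology

theorem aux_sigmaCompact_of_finiteComponents {L : Type*} [Group L] [TopologicalSpace L]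
    [IsTopologicalGroup L] [LocallyCompactSpace L] [Finite (ConnectedComponents L)] :
    SigmaCompactSpace L := by
  obtain ⟨V, hVc, hV1⟩ := exists_compact_mem_nhds (1 : L)
  set A : Set L := V ∪ V⁻¹ with hA
  have hAc : IsCompact A := hVc.union hVc.inv
  have hA1 : (1 : L) ∈ A := Or.inl (mem_of_mem_nhds hV1)
  have hAinv : A⁻¹ = A := by rw [hA, Set.union_inv, inv_inv, Set.union_comm]
  have hAint : (1 : L) ∈ interior A :=
    interior_mono subset_union_left (mem_interior_iff_mem_nhds.mpr hV1)
  set S : Set L := ⋃ n : ℕ, A ^ (n + 1) with hSdef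
  have hpowc : ∀ n : ℕ, IsCompact (A ^ (n + 1)) := by
    intro n; induction n with
    | zero => simpa using hAc
    | succ m ih => rw [pow_succ]; exact ih.mul hAc
  have hSmul : ∀ {x a : L}, x ∈ S → a ∈ A → x * a ∈ S := by
    intro x a hx ha
    obtain ⟨n, hn⟩ := mem_iUnion.mp hx
    exact mem_iUnion.mpr ⟨n + 1, by rw [pow_succ]; exact Set.mul_mem_mul hn ha⟩
  have hSopen : IsOpen S := by
    rw [isOpen_iff_forall_mem_open]
    intro x hx
    refine ⟨x • interior A, ?_, isOpen_interior.smul x, ⟨1, hAint, mul_one x⟩⟩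
    rintro y ⟨a, ha, rfl⟩
    exact hSmul hx (interior_subset ha)
  have hSclosed : IsClosed S := by
    rw [← isOpen_compl_iff, isOpen_iff_forall_mem_open]
    intro x hx
    refine ⟨x • interior A, ?_, isOpen_interior.smul x, ⟨1, hAint, mul_one x⟩⟩
    rintro y ⟨a, ha, rfl⟩ hy
    apply hx
    have ham : a⁻¹ ∈ A := by rw [← hAinv]; exact Set.inv_mem_inv.mpr (interior_subset ha)
    have := hSmul hy ham
    simpa using this
  have h1S : (1 : L) ∈ S := mem_iUnion.mpr ⟨0, by simpa using hA1⟩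
  have hC0 : connectedComponent (1 : L) ⊆ S :=
    IsClopen.connectedComponent_subset ⟨hSclosed, hSopen⟩ h1S
  have hC0sc : IsSigmaCompact (connectedComponent (1 : L)) := by
    refine ⟨fun n => connectedComponent (1 : L) ∩ A ^ (n + 1),
      fun n => (hpowc n).inter_left isClosed_connectedComponent, ?_⟩
    rw [← inter_iUnion]
    exact inter_eq_left.mpr hC0
  have hcomp : ∀ x : L, connectedComponent x ⊆ (x * ·) '' connectedComponent (1 : L) := by
    intro x
    have h1 : ((x⁻¹ * ·) '' connectedComponent x) ⊆ connectedComponent (1 : L) := by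
      apply IsPreconnected.subset_connectedComponent
      · exact isPreconnected_connectedComponent.image _ (continuous_mul_left x⁻¹).continuousOn
      · exact ⟨x, mem_connectedComponent, inv_mul_cancel x⟩
    intro y hy
    refine ⟨x⁻¹ * y, h1 ⟨y, hy, rfl⟩, by simp⟩
  rw [← isSigmaCompact_univ_iff]
  have huniv : (univ : Set L) =
      ⋃ c : ConnectedComponents L, (Quotient.out c * ·) '' connectedComponent (1 : L) := by
    apply Subset.antisymm _ (subset_univ _)
    intro y _
    refine mem_iUnion.mpr ⟨ConnectedComponents.mk y, hcomp _ ?_⟩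
    have : ConnectedComponents.mk (Quotient.out (ConnectedComponents.mk y))
        = ConnectedComponents.mk y := Quotient.out_eq _
    rw [ConnectedComponents.coe_eq_coe] at this
    rw [this]
    exact mem_connectedComponent
  rw [huniv]
  exact isSigmaCompact_iUnion _ (fun c => hC0sc.image (continuous_mul_left _))

theorem aux_isNowhereDense_image_diff {X Y : Type*} [TopologicalSpace X] [TopologicalSpace Y]
    {ρ : X → Y} (hc : Continuous ρ) (ho : IsOpenMap ρ)
    {F W : Set X} (hFcl : IsClosed F) (hFnwd : interior F = ∅) (hWo : IsOpen W) :
    IsNowhereDense (ρ '' W \ ρ '' (W \ F)) := by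
  set A := ρ '' W \ ρ '' (W \ F) with hA
  rw [IsNowhereDense]
  by_contra h
  obtain ⟨y, hy⟩ := nonempty_iff_ne_empty.mpr h
  have hVo : IsOpen (interior (closure A)) := isOpen_interior
  have hdisj : interior (closure A) ∩ ρ '' (W \ F) = ∅ := by
    by_contra hne
    obtain ⟨z, hz1, hz2⟩ := nonempty_iff_ne_empty.mpr hne
    have hOopen : IsOpen (interior (closure A) ∩ ρ '' (W \ F)) :=
      hVo.inter (ho _ (hWo.sdiff hFcl))
    have hclz : z ∈ closure A := interior_subset hz1
    obtain ⟨w, hw1, hw2⟩ := mem_closure_iff.mp hclz _ hOopen ⟨hz1, hz2⟩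
    exact hw2.2 hw1.2
  have hyW : (interior (closure A) ∩ ρ '' W).Nonempty := by
    have hycl : y ∈ closure A := interior_subset hy
    obtain ⟨w, hw1, hw2⟩ := mem_closure_iff.mp hycl _ hVo hy
    exact ⟨w, hw1, hw2.1⟩
  obtain ⟨z, hzV, x, hxW, rfl⟩ := hyW
  have hBF : ρ ⁻¹' (interior (closure A)) ∩ W ⊆ F := by
    rintro b ⟨hb1, hb2⟩
    by_contra hbF
    have : ρ b ∈ interior (closure A) ∩ ρ '' (W \ F) := ⟨hb1, ⟨b, ⟨hb2, hbF⟩, rfl⟩⟩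
    rw [hdisj] at this
    exact this
  have : x ∈ interior F :=
    interior_maximal hBF ((hVo.preimage hc).inter hWo) ⟨hzV, hxW⟩
  rw [hFnwd] at this
  exact this

theorem aux_image_mk_closed_nwd {G : Type*} [Group G] [TopologicalSpace G] [IsTopologicalGroup G]
    {H : Subgroup G} {F : Set G}
    (hFcl : IsClosed F) (hFnwd : interior F = ∅) (hsat : F * (H : Set G) = F) :
    IsClosed ((QuotientGroup.mk : G → G ⧸ H) '' F) ∧
      interior ((QuotientGroup.mk : G → G ⧸ H) '' F) = ∅ := by
  have hpre : (QuotientGroup.mk : G → G ⧸ H) ⁻¹' (QuotientGroup.mk '' F) = F := by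
    rw [QuotientGroup.preimage_image_mk_eq_mul, hsat]
  constructor
  · rw [← (QuotientGroup.isQuotientMap_mk H).isClosed_preimage, hpre]
    exact hFcl
  · by_contra h
    obtain ⟨y, hy⟩ := nonempty_iff_ne_empty.mpr h
    obtain ⟨g, rfl⟩ := QuotientGroup.mk_surjective y
    have hsub : ((QuotientGroup.mk : G → G ⧸ H) ⁻¹' interior ((QuotientGroup.mk : G → G ⧸ H) '' F) : Set G) ⊆ F := by
      exact (preimage_mono interior_subset).trans hpre.subset
    have : g ∈ interior F :=
      interior_maximal hsub (isOpen_interior.preimage QuotientGroup.continuous_mk) hy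
    rw [hFnwd] at this
    exact this

theorem aux_exists_witness {X : Type*} [TopologicalSpace X] [T2Space X]
    {t : Set X} (htc : IsCompact t) (htne : t.Nonempty) {F : ℕ → Set X}
    (hFcl : ∀ n, IsClosed (F n)) (hcov : t ⊆ ⋃ n, F n) :
    ∃ (n : ℕ) (W : Set X), IsOpen W ∧ (W ∩ t).Nonempty ∧ W ∩ t ⊆ F n := by
  haveI : CompactSpace t := isCompact_iff_compactSpace.mp htc
  haveI : Nonempty t := htne.to_subtype
  obtain ⟨n, hn⟩ := nonempty_interior_of_iUnion_of_closed
    (f := fun n => (Subtype.val ⁻¹' F n : Set t))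
    (fun n => (hFcl n).preimage continuous_subtype_val)
    (by
      apply eq_univ_of_forall
      intro x
      obtain ⟨n, hn⟩ := mem_iUnion.mp (hcov x.2)
      exact mem_iUnion.mpr ⟨n, hn⟩)
  obtain ⟨W, hWo, hWeq⟩ := isOpen_induced_iff.mp
    (isOpen_interior : IsOpen (interior (Subtype.val ⁻¹' F n : Set t)))
  obtain ⟨p, hp⟩ := hn
  rw [← hWeq] at hp
  refine ⟨n, W, hWo, ⟨p.1, hp, p.2⟩, ?_⟩
  intro z hz
  have : (⟨z, hz.2⟩ : t) ∈ Subtype.val ⁻¹' W := hz.1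
  rw [hWeq] at this
  have h2 : (⟨z, hz.2⟩ : t) ∈ Subtype.val ⁻¹' F n := interior_subset this
  exact h2

theorem aux_exists_dense_invariant_open
    {G : Type*} [Group G] [TopologicalSpace G] [IsTopologicalGroup G]
    [LocallyCompactSpace G] [T2Space G] [SigmaCompactSpace G]
    (hU : ∀ U : Set G, IsOpen U → (1 : G) ∈ U →
      ∃ N : Subgroup G, IsLieQuotient N ∧ (N : Set G) ⊆ U)
    {E : Set G} (hEcl : IsClosed E) (hEnwd : interior E = ∅) :
    ∃ (D : Set G) (T : Set (Set G × Subgroup G)),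
      IsOpen D ∧ Dense D ∧ D ∩ E = ∅ ∧ T.Countable ∧
      (∀ p ∈ T, IsLieQuotient p.2) ∧
      (∀ x : G, (∀ p ∈ T, x ∈ p.2) → ∀ d ∈ D, d * x ∈ D) := by
  classical
  set 𝒮 : Set (Set G × Subgroup G) :=
    {p | IsOpen p.1 ∧ p.1.Nonempty ∧ p.1 ⊆ Eᶜ ∧ IsLieQuotient p.2 ∧
      p.1 * (p.2 : Set G) = p.1} with h𝒮
  obtain ⟨T, hTmax⟩ := zorn_subset {T | T ⊆ 𝒮 ∧ T.PairwiseDisjoint Prod.fst} (by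
    intro c hc hchain
    refine ⟨⋃₀ c, ⟨sUnion_subset fun T' hT' => (hc hT').1, ?_⟩,
      fun s hs => subset_sUnion_of_mem hs⟩
    intro p hp q hq hpq
    obtain ⟨T₁, hT₁, hpT₁⟩ := hp
    obtain ⟨T₂, hT₂, hqT₂⟩ := hq
    rcases hchain.total hT₁ hT₂ with h | h
    · exact (hc hT₂).2 (h hpT₁) hqT₂ hpq
    · exact (hc hT₁).2 hpT₁ (h hqT₂) hpq)
  obtain ⟨⟨hT𝒮, hTdisj⟩, hmax⟩ := hTmax
  set D : Set G := ⋃ p ∈ T, p.1 with hD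
  -- countability via Haar measure
  have hTc : T.Countable := by
    borelize G
    obtain ⟨K₀⟩ : Nonempty (PositiveCompacts G) := inferInstance
    set μ := MeasureTheory.Measure.haarMeasure K₀ with hμ
    have hcnt := MeasureTheory.Measure.countable_meas_pos_of_disjoint_iUnion (μ := μ)
      (As := fun p : T => p.1.1)
      (fun p => ((hT𝒮 p.2).1).measurableSet)
      (fun i j hij => hTdisj i.2 j.2 (fun h => hij (Subtype.ext h)))
    have huniv : {i : T | 0 < μ i.1.1} = univ := eq_univ_of_forall (fun p =>
      ((hT𝒮 p.2).1).measure_pos μ ((hT𝒮 p.2).2.1))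
    rw [huniv] at hcnt
    haveI : Countable T := countable_univ_iff.mp hcnt
    exact countable_coe_iff.mp this
  -- density via maximality
  have hDopen : IsOpen D := isOpen_biUnion (fun p hp => (hT𝒮 hp).1)
  have hDE : D ∩ E = ∅ := by
    apply eq_empty_iff_forall_notMem.mpr
    rintro x ⟨hxD, hxE⟩
    obtain ⟨p, hpT, hpx⟩ := mem_iUnion₂.mp hxD
    exact (hT𝒮 hpT).2.2.1 hpx hxE
  have hDdense : Dense D := by
    rw [dense_iff_inter_open]
    intro V hVo hVne
    by_contra hVD
    have hVD' : V ∩ D = ∅ := not_nonempty_iff_eq_empty.mp hVD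
    have hEc : Dense Eᶜ := interior_eq_empty_iff_dense_compl.mp hEnwd
    obtain ⟨g, hgV, hgE⟩ := hEc.inter_open_nonempty V hVo hVne
    set O := V ∩ Eᶜ with hO
    have hOo : IsOpen O := hVo.inter hEcl.isOpen_compl
    have h1 : (1 : G) ∈ g⁻¹ • O := ⟨g, ⟨hgV, hgE⟩, inv_mul_cancel g⟩
    obtain ⟨W₁, hW₁o, hW₁1, hW₁sub⟩ :=
      exists_open_nhds_one_mul_subset (((hOo.smul g⁻¹)).mem_nhds h1)
    obtain ⟨N, hNlie, hNsub⟩ := hU W₁ hW₁o hW₁1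
    set B := g • (W₁ * (N : Set G)) with hB
    have hBo : IsOpen B := (hW₁o.mul_right).smul g
    have h1WN : (1 : G) ∈ W₁ * (N : Set G) := by
      have := Set.mul_mem_mul hW₁1 (N.one_mem)
      simpa using this
    have hBne : B.Nonempty := ⟨g, by simpa using smul_mem_smul_set (a := g) h1WN⟩
    have hBsub : B ⊆ O := by
      have h1 : (W₁ * (N : Set G)) ⊆ W₁ * W₁ := mul_subset_mul_left hNsub
      have h2 : B ⊆ g • (g⁻¹ • O) := (smul_set_mono (h1.trans hW₁sub))
      rwa [smul_inv_smul] at h2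
    have hNN : (N : Set G) * (N : Set G) = (N : Set G) := by
      apply Subset.antisymm
      · rintro z ⟨a, ha, b, hb, rfl⟩
        exact N.mul_mem ha hb
      · intro z hz
        exact ⟨z, hz, 1, N.one_mem, mul_one z⟩
    have hBN : B * (N : Set G) = B := by
      rw [hB, smul_mul_assoc, mul_assoc, hNN]
    have hp𝒮 : (B, N) ∈ 𝒮 := ⟨hBo, hBne, hBsub.trans inter_subset_right, hNlie, hBN⟩
    have hBD : ∀ q ∈ T, Disjoint B q.1 := by
      intro q hq
      rw [Set.disjoint_left]
      intro b hbB hbq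
      have : b ∈ V ∩ D := ⟨(hBsub hbB).1, mem_iUnion₂.mpr ⟨q, hq, hbq⟩⟩
      rw [hVD'] at this
      exact this
    have hpT : (B, N) ∉ T := by
      intro h
      obtain ⟨b, hb⟩ := hBne
      have : b ∈ V ∩ D := ⟨(hBsub hb).1, mem_iUnion₂.mpr ⟨(B, N), h, hb⟩⟩
      rw [hVD'] at this
      exact this
    have hmem : insert (B, N) T ∈ {T | T ⊆ 𝒮 ∧ T.PairwiseDisjoint Prod.fst} :=
      ⟨insert_subset hp𝒮 hT𝒮, hTdisj.insert (fun q hq _ => hBD q hq)⟩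
    have heq := hmax hmem (subset_insert _ _)
    exact hpT (heq (mem_insert _ _))
  refine ⟨D, T, hDopen, hDdense, hDE, hTc, fun p hp => (hT𝒮 hp).2.2.2.1, ?_⟩
  intro x hx d hd
  obtain ⟨p, hpT, hpd⟩ := mem_iUnion₂.mp hd
  have : d * x ∈ p.1 * (p.2 : Set G) := Set.mul_mem_mul hpd (hx p hpT)
  rw [(hT𝒮 hpT).2.2.2.2] at this
  exact mem_iUnion₂.mpr ⟨p, hpT, this⟩

section LieQuotient

variable {G : Type*} [Group G] [TopologicalSpace G] [IsTopologicalGroup G] [T2Space G]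
  [LocallyCompactSpace G]

theorem aux_lieQuotient_t3 (N : Subgroup G) [h : IsLieQuotient N] : T3Space (G ⧸ N) := by
  haveI : IsClosed (N : Set G) := h.compact.isClosed
  infer_instance

theorem aux_lieQuotient_sigmaCompact (N : Subgroup G) [h : IsLieQuotient N] :
    SigmaCompactSpace (G ⧸ N) := by
  haveI := h.finiteComponents
  exact aux_sigmaCompact_of_finiteComponents

theorem aux_lieQuotient_secondCountable (N : Subgroup G) [h : IsLieQuotient N] :
    SecondCountableTopology (G ⧸ N) := by
  haveI := aux_lieQuotient_sigmaCompact N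
  obtain ⟨n, cs, _⟩ := h.lie
  apply aux_secondCountable_of_sigmaCompact_of_locally
  intro x
  refine ⟨(@chartAt _ _ _ _ cs x).source, (chartAt _ x).open_source, mem_chart_source _ x, ?_⟩
  exact (chartAt _ x).secondCountableTopology_source

theorem aux_isCompact_preimage_mk (N : Subgroup G) (hN : IsCompact (N : Set G))
    [T2Space (G ⧸ N)] {C : Set (G ⧸ N)} (hC : IsCompact C) :
    IsCompact ((QuotientGroup.mk : G → G ⧸ N) ⁻¹' C) := by
  obtain ⟨V, hVc, hV1⟩ := exists_compact_mem_nhds (1 : G)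
  have hcover : C ⊆ ⋃ g : G, QuotientGroup.mk '' (g • interior V) := by
    intro c _
    obtain ⟨g, rfl⟩ := QuotientGroup.mk_surjective c
    exact mem_iUnion.mpr ⟨g, ⟨g, ⟨1, mem_interior_iff_mem_nhds.mpr hV1, mul_one g⟩, rfl⟩⟩
  obtain ⟨t, ht⟩ := hC.elim_finite_subcover _
    (fun g : G => QuotientGroup.isOpenMap_coe _ (isOpen_interior.smul g)) hcover
  apply IsCompact.of_isClosed_subset (s := ⋃ g ∈ t, (g • V) * (N : Set G))
  · exact t.finite_toSet.isCompact_biUnion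
      (fun g _ => (hVc.image (continuous_mul_left g)).mul hN)
  · exact (hC.isClosed).preimage QuotientGroup.continuous_mk
  · intro x hx
    obtain ⟨g, hgt, w, hw, hmkw⟩ := by
      have := ht hx
      simp only [mem_iUnion, Set.mem_image] at this
      exact this
    have hxwN : w⁻¹ * x ∈ N := QuotientGroup.eq.mp hmkw
    have : x = w * (w⁻¹ * x) := by group
    refine mem_biUnion hgt ?_
    rw [this]
    exact Set.mul_mem_mul (smul_set_mono interior_subset hw) hxwN

theorem aux_sigmaCompact_of_hU
    (hU : ∀ U : Set G, IsOpen U → (1 : G) ∈ U →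
      ∃ N : Subgroup G, IsLieQuotient N ∧ (N : Set G) ⊆ U) :
    SigmaCompactSpace G := by
  obtain ⟨N₀, hN₀, -⟩ := hU univ isOpen_univ trivial
  haveI := hN₀
  haveI := aux_lieQuotient_t3 N₀
  haveI := aux_lieQuotient_sigmaCompact N₀
  rw [← isSigmaCompact_univ_iff]
  refine ⟨fun n => QuotientGroup.mk ⁻¹' (compactCovering (G ⧸ N₀) n),
    fun n => aux_isCompact_preimage_mk N₀ hN₀.compact (isCompact_compactCovering _ n), ?_⟩
  rw [← preimage_iUnion, iUnion_compactCovering, preimage_univ]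

end LieQuotient


end AuxLemmas

/-- Given a locally compact Hausdorff group `G` in which every identity
neighborhood contains a member of `𝔑`, a countable subfamily `{N_i : i ∈ ω} ⊆ 𝔑` with
intersection `K`, and a non-meager set `M ⊆ G/K`, the preimage `φ_K⁻¹(M)` is non-meager
in `G`. -/
theorem stmt_10 {G : Type*} [Group G] [TopologicalSpace G] [IsTopologicalGroup G]
    [LocallyCompactSpace G] [T2Space G]
    (hU : ∀ U : Set G, IsOpen U → (1 : G) ∈ U →
      ∃ N : Subgroup G, IsLieQuotient N ∧ (N : Set G) ⊆ U)
    (Nseq : ℕ → Subgroup G) (hNseq : ∀ i, IsLieQuotient (Nseq i))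
    (M : Set (G ⧸ ⨅ i, Nseq i)) (hM : ¬ IsMeagre M) :
    ¬ IsMeagre ((QuotientGroup.mk : G → G ⧸ ⨅ i, Nseq i) ⁻¹' M) := by
  intro h
  apply hM
  classical
  haveI hσG : SigmaCompactSpace G := aux_sigmaCompact_of_hU hU
  have hKmem : ∀ x : G, x ∈ (⨅ i, Nseq i : Subgroup G) ↔ ∀ i, x ∈ Nseq i := fun x =>
    Subgroup.mem_iInf
  have hKset : (((⨅ i, Nseq i : Subgroup G) : Set G)) = ⋂ i, ((Nseq i : Set G)) :=
    Subgroup.coe_iInf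
  have hKcl : IsClosed (((⨅ i, Nseq i : Subgroup G)) : Set G) := by
    rw [hKset]; exact isClosed_iInter (fun i => ((hNseq i).compact).isClosed)
  have hKcomp : IsCompact (((⨅ i, Nseq i : Subgroup G)) : Set G) :=
    IsCompact.of_isClosed_subset (hNseq 0).compact hKcl
      (by rw [hKset]; exact iInter_subset _ 0)
  -- a closed nowhere dense cover of the preimage
  obtain ⟨S₀, hS₀nwd, hS₀c, hS₀sub⟩ := isMeagre_iff_countable_union_isNowhereDense.mp h
  obtain ⟨F, hF⟩ := ((hS₀c.image closure).insert ∅).exists_eq_range (insert_nonempty _ _)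
  have hFprop : ∀ n, IsClosed (F n) ∧ interior (F n) = ∅ := by
    intro n
    have hmem : F n ∈ insert ∅ (closure '' S₀) := by rw [hF]; exact mem_range_self n
    rcases mem_insert_iff.mp hmem with h0 | hmem'
    · rw [h0]; exact ⟨isClosed_empty, by simp⟩
    · obtain ⟨s, hs, heq⟩ := hmem'
      refine ⟨heq ▸ isClosed_closure, ?_⟩
      rw [← heq]
      exact hS₀nwd s hs
  have hcovF : (QuotientGroup.mk : G → G ⧸ ⨅ i, Nseq i) ⁻¹' M ⊆ ⋃ n, F n := by
    intro x hx
    obtain ⟨s, hsS₀, hxs⟩ := hS₀sub hx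
    have hcs : closure s ∈ range F := by
      rw [← hF]; exact mem_insert_of_mem _ (mem_image_of_mem _ hsS₀)
    obtain ⟨n, hn⟩ := hcs
    exact mem_iUnion.mpr ⟨n, hn ▸ subset_closure hxs⟩
  -- Step A for each n
  have stepA := fun n => aux_exists_dense_invariant_open hU (hFprop n).1 (hFprop n).2
  choose D T hDo hDdense hDE hTc hTlie hTinv using stepA
  have hF'cl : ∀ n, IsClosed ((D n)ᶜ) := fun n => (hDo n).isClosed_compl
  have hF'nwd : ∀ n, interior ((D n)ᶜ) = ∅ := by
    intro n
    rw [interior_compl, (hDdense n).closure_eq, compl_univ]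
  have hFF' : ∀ n, F n ⊆ (D n)ᶜ := by
    intro n x hx hxD
    have hmem : x ∈ D n ∩ F n := ⟨hxD, hx⟩
    rw [hDE n] at hmem
    exact hmem
  -- the common compact normal subgroup H
  set H : Subgroup G := (⨅ i, Nseq i) ⊓
    ⨅ (n : ℕ), ⨅ (p : Set G × Subgroup G), ⨅ (_ : p ∈ T n), p.2 with hH
  have hHmem : ∀ x : G, x ∈ H ↔ (x ∈ (⨅ i, Nseq i : Subgroup G) ∧
      ∀ n, ∀ p ∈ T n, x ∈ p.2) := by
    intro x
    rw [hH]
    simp [Subgroup.mem_inf, Subgroup.mem_iInf]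
  have hHK : H ≤ ⨅ i, Nseq i := inf_le_left
  have hHp : ∀ n, ∀ p ∈ T n, H ≤ p.2 := fun n p hp x hx => ((hHmem x).mp hx).2 n p hp
  haveI hHnormal : H.Normal := by
    constructor
    intro x hx g
    rw [hHmem] at hx ⊢
    refine ⟨?_, ?_⟩
    · exact (hKmem _).mpr (fun i =>
        ((hNseq i).toNormal).conj_mem x ((hKmem x).mp hx.1 i) g)
    · exact fun n p hp => ((hTlie n p hp).toNormal).conj_mem x (hx.2 n p hp) g
  have hHset : (H : Set G) = (((⨅ i, Nseq i : Subgroup G)) : Set G) ∩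
      ⋂ (n : ℕ), ⋂ (p : Set G × Subgroup G), ⋂ (_ : p ∈ T n), (p.2 : Set G) := by
    rw [hH, Subgroup.coe_inf]
    congr 1
    rw [Subgroup.coe_iInf]
    exact iInter_congr fun n => by
      rw [Subgroup.coe_iInf]
      exact iInter_congr fun p => Subgroup.coe_iInf
  have hHcl : IsClosed (H : Set G) := by
    rw [hHset]
    exact hKcl.inter (isClosed_iInter fun n => isClosed_iInter fun p =>
      isClosed_iInter fun hp => ((hTlie n p hp).compact).isClosed)
  haveI hHclosed : IsClosed ((H : Subgroup G) : Set G) := hHcl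
  haveI : T3Space (G ⧸ H) := inferInstance
  haveI : SigmaCompactSpace (G ⧸ H) := by
    rw [← isSigmaCompact_univ_iff]
    have himg := (isSigmaCompact_univ (X := G)).image
      (QuotientGroup.continuous_mk (N := H))
    rwa [image_univ, QuotientGroup.mk_surjective.range_eq] at himg
  -- second countability of G / H
  haveI hcntT : ∀ n, Countable {p : Set G × Subgroup G // p ∈ T n} :=
    fun n => (hTc n).to_subtype
  let ι := ℕ ⊕ (Σ n : ℕ, {p : Set G × Subgroup G // p ∈ T n})
  haveI : Countable ι := inferInstance
  let Sub : ι → Subgroup G := fun j => Sum.elim Nseq (fun q => q.2.1.2) j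
  have hSubLie : ∀ j, IsLieQuotient (Sub j) := by
    rintro (i | ⟨n, p⟩)
    · exact hNseq i
    · exact hTlie n p.1 p.2
  have hHSub : ∀ j, H ≤ Sub j := by
    rintro (i | ⟨n, p⟩)
    · exact hHK.trans (iInf_le _ i)
    · exact hHp n p.1 p.2
  let f : G ⧸ H → ∀ j : ι, G ⧸ Sub j := fun z j =>
    Quotient.lift (QuotientGroup.mk : G → G ⧸ Sub j)
      (fun a b hab => QuotientGroup.eq.mpr (hHSub j (QuotientGroup.leftRel_apply.mp hab))) z
  have hfc : Continuous f := continuous_pi (fun j =>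
    Continuous.quotient_lift QuotientGroup.continuous_mk _)
  have hfinj : Injective f := by
    intro a b hab
    obtain ⟨x, rfl⟩ := QuotientGroup.mk_surjective a
    obtain ⟨y, rfl⟩ := QuotientGroup.mk_surjective b
    have hj : ∀ j : ι, (QuotientGroup.mk x : G ⧸ Sub j) = QuotientGroup.mk y :=
      fun j => congrFun hab j
    apply QuotientGroup.eq.mpr
    rw [hHmem]
    constructor
    · exact (hKmem _).mpr (fun i => QuotientGroup.eq.mp (hj (Sum.inl i)))
    · intro n p hp
      exact QuotientGroup.eq.mp (hj (Sum.inr ⟨n, ⟨p, hp⟩⟩))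
  haveI hsc : ∀ j : ι, SecondCountableTopology (G ⧸ Sub j) := fun j => by
    haveI := hSubLie j
    exact aux_lieQuotient_secondCountable (Sub j)
  haveI ht3 : ∀ j : ι, T3Space (G ⧸ Sub j) := fun j => by
    haveI := hSubLie j
    exact aux_lieQuotient_t3 (Sub j)
  haveI ht2 : ∀ j : ι, T2Space (G ⧸ Sub j) := fun j => by
    haveI := ht3 j; infer_instance
  haveI : SecondCountableTopology (G ⧸ H) :=
    aux_secondCountable_of_sigmaCompact_of_locally (aux_loc_secondCountable hfc hfinj)
  -- the projection ρ : G/H → G/K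
  let ρ : G ⧸ H → G ⧸ ⨅ i, Nseq i :=
    Quotient.lift (QuotientGroup.mk : G → G ⧸ ⨅ i, Nseq i)
      (fun a b hab => QuotientGroup.eq.mpr (hHK (QuotientGroup.leftRel_apply.mp hab)))
  have hρmk : ∀ x : G, ρ (QuotientGroup.mk x) = QuotientGroup.mk x := fun x => rfl
  have hρc : Continuous ρ := Continuous.quotient_lift QuotientGroup.continuous_mk _
  have hρo : IsOpenMap ρ := by
    intro O hO
    have himg : ρ '' O =
        QuotientGroup.mk '' ((QuotientGroup.mk : G → G ⧸ H) ⁻¹' O) := by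
      ext y
      constructor
      · rintro ⟨z, hz, rfl⟩
        obtain ⟨x, rfl⟩ := QuotientGroup.mk_surjective z
        exact ⟨x, hz, rfl⟩
      · rintro ⟨x, hx, rfl⟩
        exact ⟨QuotientGroup.mk x, hx, rfl⟩
    rw [himg]
    exact QuotientGroup.isOpenMap_coe _ (hO.preimage QuotientGroup.continuous_mk)
  -- saturation of the complements of the D n
  have hsat : ∀ n, ((D n)ᶜ) * (H : Set G) = (D n)ᶜ := by
    intro n
    apply Subset.antisymm
    · rintro z ⟨a, ha, x, hx, rfl⟩
      intro haxD
      apply ha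
      have hxinv : ∀ p ∈ T n, x⁻¹ ∈ p.2 := fun p hp => p.2.inv_mem (hHp n p hp hx)
      have hax := hTinv n x⁻¹ hxinv (a * x) haxD
      simpa using hax
    · intro z hz
      exact ⟨z, hz, 1, H.one_mem, mul_one z⟩
  have hFbar := fun n => aux_image_mk_closed_nwd (hF'cl n) (hF'nwd n) (hsat n)
  -- basis of G/H and the covering family
  obtain ⟨Bas, hBasC, -, hBasis⟩ := exists_countable_basis (G ⧸ H)
  set AA : ℕ × Set (G ⧸ H) → Set (G ⧸ ⨅ i, Nseq i) := fun q =>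
    ρ '' q.2 \ ρ '' (q.2 \ (QuotientGroup.mk : G → G ⧸ H) '' ((D q.1)ᶜ)) with hAA
  have hmem2 : ∀ y ∈ M, ∃ q : ℕ × Set (G ⧸ H), q.2 ∈ Bas ∧ y ∈ AA q := by
    intro y hy
    obtain ⟨g, rfl⟩ := QuotientGroup.mk_surjective y
    have htc : IsCompact (ρ ⁻¹' {QuotientGroup.mk g}) := by
      have htsub : ρ ⁻¹' {QuotientGroup.mk g} =
          (QuotientGroup.mk : G → G ⧸ H) ''
            ((g * ·) '' (((⨅ i, Nseq i : Subgroup G)) : Set G)) := by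
        ext z
        constructor
        · intro hz
          obtain ⟨x, rfl⟩ := QuotientGroup.mk_surjective z
          have hzx : (QuotientGroup.mk x : G ⧸ ⨅ i, Nseq i) = QuotientGroup.mk g := hz
          have hk : g⁻¹ * x ∈ (⨅ i, Nseq i : Subgroup G) := QuotientGroup.eq.mp hzx.symm
          exact ⟨x, ⟨g⁻¹ * x, hk, by group⟩, rfl⟩
        · rintro ⟨x, ⟨k, hk, rfl⟩, rfl⟩
          simp only [mem_preimage, mem_singleton_iff]
          rw [hρmk, eq_comm]
          apply QuotientGroup.eq.mpr
          show g⁻¹ * (g * k) ∈ (⨅ i, Nseq i : Subgroup G)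
          rw [inv_mul_cancel_left]
          exact hk
      rw [htsub]
      exact (hKcomp.image (continuous_mul_left g)).image QuotientGroup.continuous_mk
    have htne : (ρ ⁻¹' {QuotientGroup.mk g}).Nonempty := ⟨QuotientGroup.mk g, rfl⟩
    have htcov : ρ ⁻¹' {QuotientGroup.mk g} ⊆
        ⋃ n, (QuotientGroup.mk : G → G ⧸ H) '' ((D n)ᶜ) := by
      intro z hz
      obtain ⟨x, rfl⟩ := QuotientGroup.mk_surjective z
      have hxM : x ∈ (QuotientGroup.mk : G → G ⧸ ⨅ i, Nseq i) ⁻¹' M := by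
        have hzx : (QuotientGroup.mk x : G ⧸ ⨅ i, Nseq i) = QuotientGroup.mk g := hz
        show (QuotientGroup.mk x : G ⧸ ⨅ i, Nseq i) ∈ M
        rw [hzx]
        exact hy
      obtain ⟨n, hn⟩ := mem_iUnion.mp (hcovF hxM)
      exact mem_iUnion.mpr ⟨n, mem_image_of_mem _ (hFF' n hn)⟩
    obtain ⟨n, W, hWo, hWt, hWsub⟩ := aux_exists_witness htc htne
      (fun n => (hFbar n).1) htcov
    obtain ⟨p, hpW, hpt⟩ := hWt
    obtain ⟨b, hbBas, hpb, hbW⟩ := hBasis.exists_subset_of_mem_open hpW hWo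
    refine ⟨(n, b), hbBas, ⟨p, hpb, hpt⟩, ?_⟩
    rintro ⟨q, ⟨hqb, hqF⟩, hq⟩
    exact hqF (hWsub ⟨hbW hqb, hq⟩)
  refine isMeagre_iff_countable_union_isNowhereDense.mpr
    ⟨AA '' ((univ : Set ℕ) ×ˢ Bas), ?_, ?_, ?_⟩
  · rintro A ⟨⟨n, b⟩, ⟨-, hb⟩, rfl⟩
    exact aux_isNowhereDense_image_diff hρc hρo (hFbar n).1 (hFbar n).2 (hBasis.isOpen hb)
  · exact (countable_univ.prod hBasC).image _
  · intro y hy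
    obtain ⟨q, hqBas, hqmem⟩ := hmem2 y hy
    exact ⟨AA q, ⟨q, ⟨trivial, hqBas⟩, rfl⟩, hqmem⟩
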